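/- arXiv:1312.6716 — 3 statements merged into one kernel-verified Lean document; each statement's English description precedes it below -/
import Mathlib

section
/- There exists u with |A^{α/2}u| < ∞ for every α ∈ ℕ such that for every σ > 0 and every c₀ ∈ ℝ there exists α ∈ ℕ with |A^{α/2}u|² > c₀ e^{σ α²} ν² κ₀^{2α}; that is, the union ∪_{σ>0} C(σ) is a proper subset of C^∞([0,L]²) ∩ H. -/
noncomputable section

abbrev Vc : Type := EuclideanSpace ℂ (Fin 2)

/-- Euclidean norm of a lattice point `k ∈ ℤ²`. -/
def knorm (k : ℤ × ℤ) : ℝ := Real.sqrt ((k.1 : ℝ) ^ 2 + (k.2 : ℝ) ^ 2)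

/-- The reality condition `û(-k) = conj (û(k))`. -/
def IsRealCond (u : ℤ × ℤ → Vc) : Prop :=
  ∀ k : ℤ × ℤ, ∀ i : Fin 2, u (-k) i = starRingEnd ℂ (u k i)

/-- Divergence-free condition `k ⬝ û(k) = 0`. -/
def DivFree (u : ℤ × ℤ → Vc) : Prop :=
  ∀ k : ℤ × ℤ, (k.1 : ℂ) * u k 0 + (k.2 : ℂ) * u k 1 = 0

/-- Membership in the Fourier model of the phase space `H`. -/
def InH (u : ℤ × ℤ → Vc) : Prop := u 0 = 0 ∧ IsRealCond u ∧ DivFree u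

/-- `|A^{α/2} u|²  =  L² Σ_{k≠0} (κ₀|k|)^{2α} |û(k)|²` for natural `α`. -/
def sqA (L κ₀ : ℝ) (u : ℤ × ℤ → Vc) (α : ℕ) : ℝ :=
  L ^ 2 * ∑' k : ℤ × ℤ, (κ₀ * knorm k) ^ (2 * α) * ‖u k‖ ^ 2

/-- Finiteness of `|A^{α/2}u|` for natural `α`. -/
def SummableA (κ₀ : ℝ) (u : ℤ × ℤ → Vc) (α : ℕ) : Prop :=
  Summable fun k : ℤ × ℤ => (κ₀ * knorm k) ^ (2 * α) * ‖u k‖ ^ 2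

/-- The class `C(σ)`. -/
def InC (L κ₀ ν σ : ℝ) (u : ℤ × ℤ → Vc) : Prop :=
  (∀ α : ℕ, SummableA κ₀ u α) ∧
  ∃ c₀ : ℝ, ∀ α : ℕ,
    sqA L κ₀ u α ≤ c₀ * Real.exp (σ * (α : ℝ) ^ 2) * ν ^ 2 * κ₀ ^ (2 * α)

/-- The summand of `|u|_b²`. -/
def ebTerm (b : ℝ) (u : ℤ × ℤ → Vc) (k : ℤ × ℤ) : ℝ :=
  Real.exp (2 * b * (Real.log (knorm k + Real.exp 1)) ^ 2) * ‖u k‖ ^ 2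

/-- `|u|_b² = L² Σ_{k≠0} e^{2b(ln(|k|+e))²} |û(k)|²`. -/
def ebSq (L b : ℝ) (u : ℤ × ℤ → Vc) : ℝ := L ^ 2 * ∑' k : ℤ × ℤ, ebTerm b u k

namespace NSaux

def mIdx (n : ℕ) : ℕ := Nat.sqrt (Nat.log 2 n)

def coeff (n : ℕ) : ℝ :=
  if n = 2 ^ (mIdx n) ^ 2 then Real.sqrt (((2:ℝ) ^ ((mIdx n) ^ 3))⁻¹) else 0

lemma coeff_nonneg (n : ℕ) : 0 ≤ coeff n := by
  unfold coeff; split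
  · exact Real.sqrt_nonneg _
  · exact le_refl 0

lemma mIdx_pow (m : ℕ) : mIdx (2 ^ m ^ 2) = m := by
  unfold mIdx; rw [Nat.log_pow one_lt_two, Nat.sqrt_eq']

lemma coeff_pow (m : ℕ) : coeff (2 ^ m ^ 2) = Real.sqrt (((2:ℝ) ^ (m ^ 3))⁻¹) := by
  unfold coeff; rw [mIdx_pow]; simp

lemma coeff_sq (m : ℕ) : coeff (2 ^ m ^ 2) ^ 2 = ((2:ℝ) ^ (m ^ 3))⁻¹ := by
  rw [coeff_pow, Real.sq_sqrt (by positivity)]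

lemma eq_of_coeff_ne (n : ℕ) (h : coeff n ≠ 0) : n = 2 ^ (mIdx n) ^ 2 := by
  by_contra hc; unfold coeff at h; rw [if_neg hc] at h; exact h rfl

def uu (k : ℤ × ℤ) : Vc :=
  if k.2 = 0 then (WithLp.equiv 2 (Fin 2 → ℂ)).symm ![0, ((coeff k.1.natAbs : ℝ) : ℂ)] else 0

lemma uu_fst (k : ℤ × ℤ) : uu k 0 = 0 := by
  unfold uu; split
  · simp [WithLp.equiv_symm_apply, PiLp.toLp_apply]
  · rfl

lemma uu_snd (k : ℤ × ℤ) (h : k.2 = 0) : uu k 1 = ((coeff k.1.natAbs : ℝ) : ℂ) := by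
  unfold uu; rw [if_pos h]; simp [WithLp.equiv_symm_apply, PiLp.toLp_apply]

lemma uu_of_ne (k : ℤ × ℤ) (h : k.2 ≠ 0) : uu k = 0 := by
  unfold uu; rw [if_neg h]

lemma norm_uu (k : ℤ × ℤ) : ‖uu k‖ = if k.2 = 0 then coeff k.1.natAbs else 0 := by
  unfold uu; split
  · rw [EuclideanSpace.norm_eq]
    simp only [WithLp.equiv_symm_apply, PiLp.toLp_apply]
    rw [Fin.sum_univ_two]
    simp only [Matrix.cons_val_zero, Matrix.cons_val_one, Matrix.head_cons, norm_zero,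
      Complex.norm_real, Real.norm_eq_abs]
    rw [abs_of_nonneg (coeff_nonneg _)]
    rw [show (0:ℝ)^2 + coeff k.1.natAbs ^ 2 = coeff k.1.natAbs ^ 2 by ring]
    exact Real.sqrt_sq (coeff_nonneg _)
  · simp

lemma uu_zero_of_coeff (k : ℤ × ℤ) (h : coeff k.1.natAbs = 0) : uu k = 0 := by
  unfold uu; split
  · rw [h]; ext i; fin_cases i <;> simp [WithLp.equiv_symm_apply, PiLp.toLp_apply]
  · rfl

lemma inH_uu : InH uu := by
  refine ⟨?_, ?_, ?_⟩
  · apply uu_zero_of_coeff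
    show coeff (0:ℤ).natAbs = 0
    unfold coeff
    rw [if_neg (by simp [mIdx])]
  · intro k i
    by_cases h : k.2 = 0
    · have h' : (-k).2 = 0 := by simp [h]
      fin_cases i
      · show uu (-k) 0 = starRingEnd ℂ (uu k 0)
        rw [uu_fst, uu_fst]; simp
      · show uu (-k) 1 = starRingEnd ℂ (uu k 1)
        rw [uu_snd _ h', uu_snd _ h]
        simp [Int.natAbs_neg]
    · have h' : (-k).2 ≠ 0 := by simpa using h
      rw [uu_of_ne _ h, uu_of_ne _ h']
      simp
  · intro k
    by_cases h : k.2 = 0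
    · rw [uu_fst, h]; ring
    · rw [uu_of_ne _ h]; simp

/-- the support injection -/
def emb (p : Bool × ℕ) : ℤ × ℤ :=
  (if p.1 then ((2:ℤ) ^ p.2 ^ 2) else -((2:ℤ) ^ p.2 ^ 2), 0)

lemma two_pow_pos (m : ℕ) : (0:ℤ) < 2 ^ m ^ 2 := by positivity

lemma emb_inj : Function.Injective emb := by
  rintro ⟨b, m⟩ ⟨b', m'⟩ h
  have h1 : (if b then ((2:ℤ) ^ m ^ 2) else -(2 ^ m ^ 2))
      = (if b' then ((2:ℤ) ^ m' ^ 2) else -(2 ^ m' ^ 2)) := congrArg Prod.fst h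
  have hpow : ∀ a c : ℕ, (2:ℤ) ^ a = 2 ^ c → a = c := by
    intro a c hac
    exact pow_right_injective₀ (by norm_num) (by norm_num) hac
  have hp := two_pow_pos m
  have hp' := two_pow_pos m'
  cases b <;> cases b' <;> simp only [Bool.false_eq_true, if_true, if_false, ite_true, ite_false] at h1
  · have := neg_injective h1
    rw [Nat.pow_left_injective two_ne_zero (hpow _ _ this)]
  · exact absurd h1 (by intro hh; nlinarith)
  · exact absurd h1 (by intro hh; nlinarith)
  · rw [Nat.pow_left_injective two_ne_zero (hpow _ _ h1)]

lemma support_emb (k : ℤ × ℤ) (hk : k ∉ Set.range emb) : uu k = 0 := by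
  by_contra hu
  have h2 : k.2 = 0 := by
    by_contra h; exact hu (uu_of_ne _ h)
  have hc : coeff k.1.natAbs ≠ 0 := fun h => hu (uu_zero_of_coeff _ h)
  have heq := eq_of_coeff_ne _ hc
  set m := mIdx k.1.natAbs with hm
  apply hk
  rcases Int.natAbs_eq k.1 with h1 | h1
  · refine ⟨(true, m), ?_⟩
    have hk1 : k.1 = (2:ℤ) ^ m ^ 2 := by rw [h1, heq]; push_cast; ring
    simp [emb, Prod.ext_iff, hk1, h2]
  · refine ⟨(false, m), ?_⟩
    have hk1 : k.1 = -((2:ℤ) ^ m ^ 2) := by rw [h1, heq]; push_cast; ring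
    simp [emb, Prod.ext_iff, hk1, h2]

lemma knorm_emb (p : Bool × ℕ) : knorm (emb p) = (2:ℝ) ^ p.2 ^ 2 := by
  obtain ⟨b, m⟩ := p
  have h1 : (((emb (b, m)).1 : ℝ)) ^ 2 = ((2:ℝ) ^ m ^ 2) ^ 2 := by
    cases b <;> simp [emb] <;> push_cast <;> ring
  have h2 : (((emb (b, m)).2 : ℤ) : ℝ) = 0 := by norm_num [emb]
  unfold knorm
  rw [h1, h2]
  rw [show ((2:ℝ) ^ m ^ 2) ^ 2 + (0:ℝ) ^ 2 = ((2:ℝ) ^ m ^ 2) ^ 2 by ring]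
  exact Real.sqrt_sq (by positivity)

lemma normsq_uu_emb (p : Bool × ℕ) : ‖uu (emb p)‖ ^ 2 = ((2:ℝ) ^ (p.2 ^ 3))⁻¹ := by
  obtain ⟨b, m⟩ := p
  have h2 : (emb (b, m)).2 = 0 := rfl
  have hnat : (emb (b, m)).1.natAbs = 2 ^ m ^ 2 := by
    cases b <;> simp [emb, Int.natAbs_neg, Int.natAbs_pow]
  rw [norm_uu, if_pos h2, hnat, coeff_sq]

/-- the term evaluated on the image -/
lemma term_emb (κ₀ : ℝ) (α : ℕ) (p : Bool × ℕ) :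
    (κ₀ * knorm (emb p)) ^ (2 * α) * ‖uu (emb p)‖ ^ 2
      = κ₀ ^ (2 * α) * (((2:ℝ) ^ (p.2 ^ 2)) ^ (2 * α) * ((2:ℝ) ^ (p.2 ^ 3))⁻¹) := by
  rw [knorm_emb, normsq_uu_emb, mul_pow]; ring

lemma exponent_bound (α m : ℕ) :
    ((2 * α * m ^ 2 : ℕ) : ℤ) - (m ^ 3 : ℕ) ≤ ((8 * α ^ 3 + 2 * α : ℕ) : ℤ) - (m : ℕ) := by
  push_cast
  have ha : (0:ℤ) ≤ (α:ℤ) := Int.natCast_nonneg α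
  have hm : (0:ℤ) ≤ (m:ℤ) := Int.natCast_nonneg m
  rcases le_or_gt (m : ℤ) (2 * α) with h | h
  · have hmsq : (m:ℤ) ^ 2 ≤ 4 * (α:ℤ) ^ 2 := by nlinarith
    have h3 : 2 * (α:ℤ) * (m:ℤ) ^ 2 ≤ 8 * (α:ℤ) ^ 3 := by nlinarith
    have h4 : (0:ℤ) ≤ (m:ℤ) ^ 3 := by positivity
    linarith
  · have h1 : (1:ℤ) ≤ (m:ℤ) - 2 * α := by linarith
    have hm1 : (1:ℤ) ≤ (m:ℤ) := by linarith
    have h2 : (m:ℤ) ^ 2 ≤ (m:ℤ) ^ 2 * ((m:ℤ) - 2 * α) := le_mul_of_one_le_right (by positivity) h1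
    have h3 : (m:ℤ) ≤ (m:ℤ) ^ 2 := by nlinarith
    have h5 : (0:ℤ) ≤ (α:ℤ) ^ 3 := by positivity
    nlinarith

lemma g_summable (κ₀ : ℝ) (α : ℕ) :
    Summable fun m : ℕ => ((2:ℝ) ^ (m ^ 2)) ^ (2 * α) * ((2:ℝ) ^ (m ^ 3))⁻¹ := by
  apply Summable.of_nonneg_of_le (g := fun m => ((2:ℝ) ^ (m ^ 2)) ^ (2 * α) * ((2:ℝ) ^ (m ^ 3))⁻¹)
    (f := fun m : ℕ => (2:ℝ) ^ (8 * α ^ 3 + 2 * α) * (2⁻¹ : ℝ) ^ m)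
  · intro m; positivity
  · intro m
    have hne : (2:ℝ) ≠ 0 := two_ne_zero
    have e1 : ((2:ℝ) ^ (m ^ 2)) ^ (2 * α) * ((2:ℝ) ^ (m ^ 3))⁻¹
        = (2:ℝ) ^ (((2 * α * m ^ 2 : ℕ) : ℤ) - ((m ^ 3 : ℕ) : ℤ)) := by
      rw [zpow_sub₀ hne, ← pow_mul]
      rw [zpow_natCast, zpow_natCast]
      rw [div_eq_mul_inv]
      ring_nf
    have e2 : (2:ℝ) ^ (8 * α ^ 3 + 2 * α) * (2⁻¹ : ℝ) ^ m
        = (2:ℝ) ^ (((8 * α ^ 3 + 2 * α : ℕ) : ℤ) - ((m : ℕ) : ℤ)) := by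
      rw [zpow_sub₀ hne, zpow_natCast, zpow_natCast, div_eq_mul_inv, inv_pow]
    rw [e1, e2]
    exact zpow_le_zpow_right₀ one_le_two (exponent_bound α m)
  · exact (summable_geometric_of_lt_one (by norm_num) (by norm_num)).mul_left _

lemma summableA_uu (κ₀ : ℝ) (α : ℕ) : SummableA κ₀ uu α := by
  unfold SummableA
  rw [← Function.Injective.summable_iff emb_inj (fun k hk => by rw [support_emb k hk]; simp)]
  have : (fun k : ℤ × ℤ => (κ₀ * knorm k) ^ (2 * α) * ‖uu k‖ ^ 2) ∘ emb
      = fun p : Bool × ℕ => κ₀ ^ (2 * α) * (((2:ℝ) ^ (p.2 ^ 2)) ^ (2 * α) * ((2:ℝ) ^ (p.2 ^ 3))⁻¹) := by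
    funext p; exact term_emb κ₀ α p
  rw [this]
  have hnn : 0 ≤ fun p : Bool × ℕ =>
      κ₀ ^ (2 * α) * (((2:ℝ) ^ (p.2 ^ 2)) ^ (2 * α) * ((2:ℝ) ^ (p.2 ^ 3))⁻¹) := by
    intro p
    have h0 : (0:ℝ) ≤ κ₀ ^ (2 * α) := (even_two_mul α).pow_nonneg _
    positivity
  rw [summable_prod_of_nonneg hnn]
  exact ⟨fun b => ((g_summable κ₀ α).mul_left _), Summable.of_finite⟩

end NSaux

/-- There exists `u ∈ C^∞([0,L]²) ∩ H` (i.e. `u ∈ H` with all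
`|A^{α/2}u|` finite) such that for every `σ > 0` and every `c₀ ∈ ℝ` there is an
`α ∈ ℕ` with `|A^{α/2}u|² > c₀ e^{σα²} ν² κ₀^{2α}`; that is, `∪_{σ>0} C(σ)` is a
proper subset of `C^∞([0,L]²) ∩ H`. -/
theorem union_C_proper_subset_of_smooth (L ν κ₀ : ℝ) (hL : 0 < L) (hν : 0 < ν)
    (hκ₀ : κ₀ = 2 * Real.pi / L) :
    ∃ u : ℤ × ℤ → Vc, InH u ∧ (∀ α : ℕ, SummableA κ₀ u α) ∧
      ∀ σ : ℝ, 0 < σ → ∀ c₀ : ℝ, ∃ α : ℕ,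
        c₀ * Real.exp (σ * (α : ℝ) ^ 2) * ν ^ 2 * κ₀ ^ (2 * α) < sqA L κ₀ u α := by
  have hκpos : 0 < κ₀ := by
    rw [hκ₀]; positivity
  refine ⟨NSaux.uu, NSaux.inH_uu, fun α => NSaux.summableA_uu κ₀ α, ?_⟩
  intro σ hσ c₀
  -- choose α large
  set B : ℝ := Real.log (|c₀| * ν ^ 2 / L ^ 2 + 1) with hB
  have hBnn : 0 ≤ B := Real.log_nonneg (by
    have : (0:ℝ) ≤ |c₀| * ν ^ 2 / L ^ 2 := by positivity
    linarith)
  obtain ⟨α, hα⟩ := exists_nat_ge (max 1 (max ((σ + 1) / Real.log 2) B))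
  refine ⟨α, ?_⟩
  have hα1 : (1:ℝ) ≤ α := le_trans (le_max_left _ _) hα
  have hα2 : (σ + 1) / Real.log 2 ≤ α := le_trans (le_trans (le_max_left _ _) (le_max_right _ _)) hα
  have hα3 : B ≤ α := le_trans (le_trans (le_max_right _ _) (le_max_right _ _)) hα
  have hlog2 : (0:ℝ) < Real.log 2 := Real.log_pos one_lt_two
  have hαl : σ + 1 ≤ (α:ℝ) * Real.log 2 := by
    rw [div_le_iff₀ hlog2] at hα2; linarith
  -- lower bound for sqA: term at k = (2^(α²), 0)
  have hsum := NSaux.summableA_uu κ₀ α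
  have hterm : (κ₀ * knorm (NSaux.emb (true, α))) ^ (2 * α) * ‖NSaux.uu (NSaux.emb (true, α))‖ ^ 2
      = κ₀ ^ (2 * α) * (2:ℝ) ^ (α ^ 3) := by
    rw [NSaux.term_emb]
    congr 1
    rw [← pow_mul]
    rw [show α ^ 2 * (2 * α) = α ^ 3 + α ^ 3 by ring, pow_add]
    exact mul_inv_cancel_right₀ (by positivity) _
  have hnonneg : ∀ k : ℤ × ℤ, 0 ≤ (κ₀ * knorm k) ^ (2 * α) * ‖NSaux.uu k‖ ^ 2 := by
    intro k
    have h0 : (0:ℝ) ≤ (κ₀ * knorm k) ^ (2 * α) := (even_two_mul α).pow_nonneg _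
    positivity
  have hle : κ₀ ^ (2 * α) * (2:ℝ) ^ (α ^ 3)
      ≤ ∑' k : ℤ × ℤ, (κ₀ * knorm k) ^ (2 * α) * ‖NSaux.uu k‖ ^ 2 := by
    rw [← hterm]
    exact Summable.le_tsum hsum _ (fun j _ => hnonneg j)
  have hsqA : L ^ 2 * (κ₀ ^ (2 * α) * (2:ℝ) ^ (α ^ 3)) ≤ sqA L κ₀ NSaux.uu α := by
    unfold sqA
    exact mul_le_mul_of_nonneg_left hle (by positivity)
  -- now show the strict inequality
  have key : c₀ * Real.exp (σ * (α:ℝ) ^ 2) * ν ^ 2 < L ^ 2 * (2:ℝ) ^ (α ^ 3) := by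
    have h2pow : (2:ℝ) ^ (α ^ 3) = Real.exp ((α ^ 3 : ℕ) * Real.log 2) := by
      rw [← Real.rpow_natCast 2 (α ^ 3), Real.rpow_def_of_pos two_pos, mul_comm]
    have hE : B + σ * (α:ℝ) ^ 2 ≤ (α ^ 3 : ℕ) * Real.log 2 := by
      push_cast
      have h1 : (α:ℝ) ^ 3 * Real.log 2 = (α:ℝ) ^ 2 * ((α:ℝ) * Real.log 2) := by ring
      have h2 : (α:ℝ) ^ 2 * (σ + 1) ≤ (α:ℝ) ^ 2 * ((α:ℝ) * Real.log 2) :=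
        mul_le_mul_of_nonneg_left hαl (by positivity)
      have h3 : B ≤ (α:ℝ) ^ 2 := by nlinarith
      nlinarith
    have hc : c₀ * ν ^ 2 < L ^ 2 * Real.exp B := by
      rw [hB, Real.exp_log (by positivity)]
      have : c₀ * ν ^ 2 ≤ |c₀| * ν ^ 2 := by
        have := le_abs_self c₀
        nlinarith
      calc c₀ * ν ^ 2 ≤ |c₀| * ν ^ 2 := this
        _ < L ^ 2 * (|c₀| * ν ^ 2 / L ^ 2 + 1) := by
            rw [mul_add, mul_div_cancel₀ _ (by positivity : (L:ℝ) ^ 2 ≠ 0)]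
            nlinarith
    calc c₀ * Real.exp (σ * (α:ℝ) ^ 2) * ν ^ 2
        = (c₀ * ν ^ 2) * Real.exp (σ * (α:ℝ) ^ 2) := by ring
      _ < (L ^ 2 * Real.exp B) * Real.exp (σ * (α:ℝ) ^ 2) := by
          exact mul_lt_mul_of_pos_right hc (Real.exp_pos _)
      _ = L ^ 2 * Real.exp (B + σ * (α:ℝ) ^ 2) := by rw [mul_assoc, ← Real.exp_add]
      _ ≤ L ^ 2 * Real.exp ((α ^ 3 : ℕ) * Real.log 2) := by
          exact mul_le_mul_of_nonneg_left (Real.exp_le_exp.mpr hE) (by positivity)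
      _ = L ^ 2 * (2:ℝ) ^ (α ^ 3) := by rw [h2pow]
  have hκp : (0:ℝ) < κ₀ ^ (2 * α) := pow_pos hκpos _
  calc c₀ * Real.exp (σ * (α:ℝ) ^ 2) * ν ^ 2 * κ₀ ^ (2 * α)
      < (L ^ 2 * (2:ℝ) ^ (α ^ 3)) * κ₀ ^ (2 * α) := mul_lt_mul_of_pos_right key hκp
    _ = L ^ 2 * (κ₀ ^ (2 * α) * (2:ℝ) ^ (α ^ 3)) := by ring
    _ ≤ sqA L κ₀ NSaux.uu α := hsqA
end
end

section
/- Let σ > 0, ε ∈ [0,1], and set b := 1/(2^{4+2ε} σ). Suppose u satisfies |A^{α/2}u|² ≤ c₀ e^{σ α²} ν² κ₀^{2α} for all α ∈ ℕ, for some c₀ > 0, and that |A^{1/2}u| < ∞. Then L² Σ_{k≠0} e^{2b(ln(|k|+e))^{1+ε}} |û(k)|² is finite, and moreover L² Σ_{k≠0} e^{2b(ln(|k|+e))^{1+ε}} |û(k)|² ≤ (4/3) c(ε) |u|² + (c₀ c₁)^{2/3} ν^{4/3} κ₀^{-2/3} |A^{1/2}u|^{2/3}, where c(ε) := e^{2b(ln(e²+e))^{1+ε}}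 and c₁ := 1/(e² - e). -/
set_option maxHeartbeats 1000000


noncomputable section
open Real

private lemma knorm_nonneg (k : ℤ × ℤ) : 0 ≤ knorm k := Real.sqrt_nonneg _

private lemma knorm_zero : knorm 0 = 0 := by simp [knorm]

private lemma one_le_knorm {k : ℤ × ℤ} (hk : k ≠ 0) : 1 ≤ knorm k := by
  have h : (1:ℝ) ≤ (k.1:ℝ)^2 + (k.2:ℝ)^2 := by
    have h1 : k.1 ≠ 0 ∨ k.2 ≠ 0 := by
      by_contra h; push_neg at h; exact hk (Prod.ext h.1 h.2)
    have h2 : (1:ℤ) ≤ k.1^2 + k.2^2 := by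
      rcases h1 with h | h
      · have := Int.one_le_abs h
        nlinarith [sq_abs k.1, sq_nonneg k.2]
      · have := Int.one_le_abs h
        nlinarith [sq_abs k.2, sq_nonneg k.1]
    exact_mod_cast h2
  calc (1:ℝ) = Real.sqrt 1 := Real.sqrt_one.symm
    _ ≤ knorm k := Real.sqrt_le_sqrt h

private lemma summable_gauss (σ : ℝ) (hσ : 0 < σ) (r : ℝ) (hr : 1 ≤ r) :
    Summable (fun a : ℕ => Real.exp (-σ*(a:ℝ)^2 - (a:ℝ) - 2) * r ^ (2*a)) := by
  have hr0 : (0:ℝ) < r := by linarith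
  set t := Real.log r with htdef
  have ht0 : 0 ≤ t := Real.log_nonneg hr
  clear_value t
  have hterm : ∀ a : ℕ, Real.exp (-σ*(a:ℝ)^2 - (a:ℝ) - 2) * r^(2*a)
      = Real.exp (2*(a:ℝ)*t - σ*(a:ℝ)^2 - (a:ℝ) - 2) := by
    intro a
    rw [show r ^ (2*a) = Real.exp (((2*a : ℕ):ℝ) * t) by
        rw [Real.exp_nat_mul, htdef, Real.exp_log hr0],
      ← Real.exp_add]
    congr 1
    push_cast; ring
  obtain ⟨N, hN⟩ : ∃ N : ℕ, 2*t ≤ σ*(N:ℝ) := by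
    refine ⟨⌈2*t/σ⌉₊, ?_⟩
    have h1 : 2*t/σ ≤ (⌈2*t/σ⌉₊ : ℝ) := Nat.le_ceil _
    rw [div_le_iff₀ hσ] at h1
    linarith
  apply (summable_nat_add_iff N).mp
  have hgeom : Summable (fun a : ℕ => Real.exp (-1) ^ a) :=
    summable_geometric_of_lt_one (exp_pos _).le (exp_lt_one_iff.mpr (by norm_num))
  apply Summable.of_nonneg_of_le (fun a => by positivity) (fun a => ?_) hgeom
  rw [hterm (a+N)]
  have h1 : 2*((a+N:ℕ):ℝ)*t - σ*((a+N:ℕ):ℝ)^2 - ((a+N:ℕ):ℝ) - 2 ≤ -(a:ℝ) := by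
    push_cast
    have hc1 : ((a:ℝ)+N) * (2*t) ≤ ((a:ℝ)+N) * (σ*N) :=
      mul_le_mul_of_nonneg_left hN (by positivity)
    have hc2 : (0:ℝ) ≤ σ * (a:ℝ) * ((a:ℝ)+N) := by positivity
    nlinarith [hc1, hc2]
  calc Real.exp (2*((a+N:ℕ):ℝ)*t - σ*((a+N:ℕ):ℝ)^2 - ((a+N:ℕ):ℝ) - 2)
      ≤ Real.exp (-(a:ℝ)) := exp_le_exp.mpr h1
    _ = Real.exp (-1) ^ a := by
        rw [← Real.exp_nat_mul]; congr 1; push_cast; ring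

private lemma holder32 {φ ψ : ℤ×ℤ → ℝ} (hφ0 : ∀ k, 0 ≤ φ k) (hψ0 : ∀ k, 0 ≤ ψ k)
    (hφs : Summable φ) (hψs : Summable ψ) :
    (Summable fun k => (φ k)^((2:ℝ)/3) * (ψ k)^((1:ℝ)/3)) ∧
    ∑' k, (φ k)^((2:ℝ)/3) * (ψ k)^((1:ℝ)/3) ≤
      (∑' k, φ k)^((2:ℝ)/3) * (∑' k, ψ k)^((1:ℝ)/3) := by
  have hpq : Real.HolderConjugate (3/2) 3 := ⟨by norm_num, by norm_num, by norm_num⟩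
  have hid1 : ∀ k, ((φ k)^((2:ℝ)/3))^((3:ℝ)/2) = φ k := by
    intro k
    rw [← Real.rpow_mul (hφ0 k)]
    norm_num
  have hid2 : ∀ k, ((ψ k)^((1:ℝ)/3))^((3:ℝ)) = ψ k := by
    intro k
    rw [← Real.rpow_mul (hψ0 k)]
    norm_num
  have hf_sum : Summable (fun k => ((φ k)^((2:ℝ)/3))^((3:ℝ)/2)) := by
    apply Summable.congr hφs
    intro k
    exact (hid1 k).symm
  have hg_sum : Summable (fun k => ((ψ k)^((1:ℝ)/3))^((3:ℝ))) := by
    apply Summable.congr hψs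
    intro k
    exact (hid2 k).symm
  have h := Real.summable_and_inner_le_Lp_mul_Lq_tsum_of_nonneg (f := fun k => (φ k)^((2:ℝ)/3))
    (g := fun k => (ψ k)^((1:ℝ)/3)) hpq (fun k => Real.rpow_nonneg (hφ0 k) _)
    (fun k => Real.rpow_nonneg (hψ0 k) _) (by exact_mod_cast hf_sum) (by exact_mod_cast hg_sum)
  obtain ⟨h1, h2⟩ := h
  refine ⟨h1, ?_⟩
  have e1 : ∑' k, ((φ k)^((2:ℝ)/3))^((3:ℝ)/2) = ∑' k, φ k := tsum_congr hid1
  have e2 : ∑' k, ((ψ k)^((1:ℝ)/3))^((3:ℝ)) = ∑' k, ψ k := tsum_congr hid2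
  have e3 : (1:ℝ)/(3/2) = 2/3 := by norm_num
  rw [e1, e2, e3] at h2
  exact h2


private lemma key_alpha (σ ε : ℝ) (hσ : 0 < σ) (hε0 : 0 ≤ ε) (hε1 : ε ≤ 1)
    (r : ℝ) (hr : 1 ≤ r) :
    ∃ α : ℕ,
      max (Real.exp (2 * (1 / ((2:ℝ) ^ ((4:ℝ) + 2 * ε) * σ)) *
            Real.log (r + Real.exp 1) ^ ((1:ℝ) + ε)) -
          4 / 3 * Real.exp (2 * (1 / ((2:ℝ) ^ ((4:ℝ) + 2 * ε) * σ)) *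
            Real.log (Real.exp 1 ^ 2 + Real.exp 1) ^ ((1:ℝ) + ε))) 0 ^ ((3:ℝ)/2)
        ≤ r ^ (2 * α + 1) * Real.exp (-σ * (α:ℝ) ^ 2 - (α:ℝ) - 2) := by
  have he1 : (2.7182818283:ℝ) < Real.exp 1 := Real.exp_one_gt_d9
  have he2 : Real.exp 1 < 2.7182818286 := Real.exp_one_lt_d9
  set c4 : ℝ := (2:ℝ) ^ ((4:ℝ) + 2 * ε) with hc4def
  have hc4 : 0 < c4 := rpow_pos_of_pos two_pos _
  set b2 : ℝ := 2 * (1 / (c4 * σ)) with hb2def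
  have hb2 : 0 < b2 := by positivity
  set X : ℝ := Real.log (r + Real.exp 1) with hXdef
  set Y : ℝ := Real.log (Real.exp 1 ^ 2 + Real.exp 1) with hYdef
  set p : ℝ := (1:ℝ) + ε with hpdef
  have hp0 : 0 < p := by simp only [hpdef]; linarith
  have hp2 : p ≤ 2 := by simp only [hpdef]; linarith
  have hX1 : (1:ℝ) ≤ X := by
    have h := Real.log_le_log (exp_pos 1)
      (show Real.exp 1 ≤ r + Real.exp 1 by linarith)
    rwa [Real.log_exp] at h
  have hY1 : (1:ℝ) ≤ Y := by
    have h := Real.log_le_log (exp_pos 1)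
      (show Real.exp 1 ≤ Real.exp 1 ^ 2 + Real.exp 1 by nlinarith [sq_nonneg (Real.exp 1)])
    rwa [Real.log_exp] at h
  set w : ℝ := Real.exp (b2 * X ^ p) with hwdef
  set θ : ℝ := 4 / 3 * Real.exp (b2 * Y ^ p) with hθdef
  clear_value c4 b2 X Y p w θ
  have hθ43 : 4/3 ≤ θ := by
    have : (1:ℝ) ≤ Real.exp (b2 * Y ^ p) :=
      one_le_exp (by positivity)
    rw [hθdef]; nlinarith
  rcases le_or_gt w θ with hwθ | hwθ
  · refine ⟨0, ?_⟩
    rw [max_eq_right (by linarith), Real.zero_rpow (by norm_num)]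
    positivity
  · -- θ < w
    have hmax : max (w - θ) 0 = w - θ := max_eq_left (by linarith)
    have hXY : Y < X := by
      by_contra hc
      push_neg at hc
      have h1 : X ^ p ≤ Y ^ p := rpow_le_rpow (by linarith) hc hp0.le
      have h2 : w ≤ Real.exp (b2 * Y ^ p) := by
        rw [hwdef]
        exact exp_le_exp.mpr (by nlinarith)
      have : w ≤ θ := by rw [hθdef]; nlinarith [exp_pos (b2 * Y ^ p)]
      linarith
    have hre : Real.exp 1 ^ 2 < r := by
      have h1 : Real.exp Y < Real.exp X := exp_lt_exp.mpr hXY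
      rw [hXdef, hYdef, Real.exp_log (by positivity),
        Real.exp_log (by nlinarith)] at h1
      linarith
    have hr0 : (0:ℝ) < r := by linarith
    set t : ℝ := Real.log r with htdef
    clear_value t
    have ht2 : 2 < t := by
      have h1 : Real.log (Real.exp 1 ^ 2) < t := htdef ▸ log_lt_log (by positivity) hre
      have h2 : Real.log (Real.exp 1 ^ 2) = 2 := by
        rw [← Real.exp_nat_mul]; norm_num [Real.log_exp]
      linarith
    have hrt : r = Real.exp t := htdef ▸ (Real.exp_log hr0).symm
    have hXt : X ≤ t + 1/2 := by
      have hs : (1.64:ℝ) ≤ Real.exp (1/2) := by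
        have hx : Real.exp (1/2) * Real.exp (1/2) = Real.exp 1 := by
          rw [← Real.exp_add]; norm_num
        nlinarith [Real.exp_pos (1/2), hx, he1]
      have hre2 : r + Real.exp 1 ≤ r * Real.exp (1/2) := by
        nlinarith [hs, hre, he1, he2, hr0, mul_le_mul_of_nonneg_left hs hr0.le]
      calc X ≤ Real.log (r * Real.exp (1/2)) :=
            hXdef ▸ Real.log_le_log (by positivity) hre2
        _ = t + 1/2 := by
            rw [Real.log_mul (by positivity) (exp_pos _).ne', Real.log_exp, htdef]
    have hX0 : (0:ℝ) ≤ X := by linarith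
    -- master bound  X^p ≤ 25/512 * c4 * t^2
    have hM : X ^ p ≤ 25/512 * c4 * t ^ 2 := by
      have h54 : X ≤ 5/4 * t := by linarith
      have h1 : X ^ p ≤ (5/4 * t) ^ p := rpow_le_rpow hX0 h54 hp0.le
      have h2 : ((5:ℝ)/4 * t) ^ p = (5/4 : ℝ) ^ p * t ^ p :=
        mul_rpow (by norm_num) (by linarith)
      have h3 : t ^ p = t ^ (2:ℝ) * t ^ (ε - 1) := by
        rw [← rpow_add (by linarith : (0:ℝ) < t)]
        congr 1
        rw [hpdef]; ring
      have h4 : t ^ (ε - 1) ≤ 2 ^ (ε - 1) := by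
        rw [show ε - 1 = -(1 - ε) by ring, rpow_neg (by linarith : (0:ℝ) ≤ t),
          rpow_neg (by norm_num : (0:ℝ) ≤ 2)]
        exact inv_anti₀ (rpow_pos_of_pos two_pos _)
          (rpow_le_rpow (by norm_num) (by linarith) (by linarith))
      have h5 : (5/4 : ℝ) ^ p * 2 ^ (ε - 1) ≤ 25/512 * c4 := by
        have hA : (0:ℝ) < (2:ℝ) ^ ε := rpow_pos_of_pos two_pos _
        have e1 : (5/4 : ℝ) ^ p = 5/4 * (5/4 : ℝ) ^ ε := by
          rw [hpdef, rpow_add (by norm_num : (0:ℝ) < 5/4), rpow_one]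
        have e2 : (2:ℝ) ^ (ε - 1) = (2:ℝ) ^ ε / 2 := by
          rw [rpow_sub two_pos, rpow_one]
        have e3 : c4 = 16 * ((2:ℝ) ^ ε * (2:ℝ) ^ ε) := by
          rw [hc4def, show (4:ℝ) + 2*ε = ε + (ε + 4) by ring, rpow_add two_pos,
            rpow_add two_pos, show ((4:ℝ)) = ((4:ℕ):ℝ) by norm_num, rpow_natCast]
          ring
        have e4 : (5/4 : ℝ) ^ ε ≤ (2:ℝ) ^ ε :=
          rpow_le_rpow (by norm_num) (by norm_num) hε0
        have e5 : (0:ℝ) < (5/4 : ℝ) ^ ε := rpow_pos_of_pos (by norm_num) _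
        rw [e1, e2, e3]
        nlinarith
      have ht2' : t ^ (2:ℝ) = t ^ 2 := by
        rw [show ((2:ℝ)) = ((2:ℕ):ℝ) by norm_num, rpow_natCast]
      have e5' : (0:ℝ) < (5/4 : ℝ) ^ p := rpow_pos_of_pos (by norm_num) _
      calc X ^ p ≤ (5/4 * t) ^ p := h1
        _ = (5/4 : ℝ) ^ p * t ^ p := h2
        _ = ((5/4 : ℝ) ^ p * t ^ (ε - 1)) * t ^ 2 := by rw [h3, ht2']; ring
        _ ≤ ((5/4 : ℝ) ^ p * 2 ^ (ε - 1)) * t ^ 2 := by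
            apply mul_le_mul_of_nonneg_right _ (sq_nonneg t)
            exact mul_le_mul_of_nonneg_left h4 e5'.le
        _ ≤ (25/512 * c4) * t ^ 2 := mul_le_mul_of_nonneg_right h5 (sq_nonneg t)
        _ = 25/512 * c4 * t ^ 2 := by ring
    -- reduction
    have main : ∀ α : ℕ, σ * (α:ℝ) ^ 2 + (α:ℝ) + 2 + 3/2 * (b2 * X ^ p) ≤ (2 * (α:ℝ) + 1) * t →
        max (w - θ) 0 ^ ((3:ℝ)/2) ≤ r ^ (2 * α + 1) * Real.exp (-σ * (α:ℝ) ^ 2 - (α:ℝ) - 2) := by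
      intro α hα
      rw [hmax]
      have h1 : (w - θ) ^ ((3:ℝ)/2) ≤ w ^ ((3:ℝ)/2) :=
        rpow_le_rpow (by linarith) (by linarith) (by norm_num)
      have h2 : w ^ ((3:ℝ)/2) = Real.exp (b2 * X ^ p * (3/2)) := by
        rw [hwdef, ← Real.exp_mul]
      have h3 : Real.exp (b2 * X ^ p * (3/2)) ≤
          Real.exp ((2 * (α:ℝ) + 1) * t - σ * (α:ℝ) ^ 2 - (α:ℝ) - 2) :=
        exp_le_exp.mpr (by linarith)
      have h4 : Real.exp ((2 * (α:ℝ) + 1) * t - σ * (α:ℝ) ^ 2 - (α:ℝ) - 2)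
          = r ^ (2 * α + 1) * Real.exp (-σ * (α:ℝ) ^ 2 - (α:ℝ) - 2) := by
        rw [show (2 * (α:ℝ) + 1) * t - σ * (α:ℝ) ^ 2 - (α:ℝ) - 2
            = ((2 * α + 1 : ℕ) : ℝ) * t + (-σ * (α:ℝ) ^ 2 - (α:ℝ) - 2) by push_cast; ring,
          Real.exp_add, Real.exp_nat_mul, ← hrt]
      linarith [h1, h3, h2 ▸ h1]
    rcases le_or_gt (w - θ) 1 with hA1 | hA1
    · refine ⟨0, ?_⟩
      have hle1 : max (w - θ) 0 ^ ((3:ℝ)/2) ≤ 1 :=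
        rpow_le_one (le_max_right _ 0) (max_le hA1 zero_le_one) (by norm_num)
      have h2r : Real.exp 1 ^ 2 * Real.exp (-σ * (0:ℝ) ^ 2 - (0:ℝ) - 2) = 1 := by
        rw [show -σ * (0:ℝ) ^ 2 - (0:ℝ) - 2 = -2 by ring, Real.exp_neg,
          show Real.exp 1 ^ 2 = Real.exp 2 by rw [← Real.exp_nat_mul]; norm_num]
        field_simp
      have := mul_lt_mul_of_pos_right hre (exp_pos (-σ * (0:ℝ) ^ 2 - (0:ℝ) - 2))
      calc max (w - θ) 0 ^ ((3:ℝ)/2) ≤ 1 := hle1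
        _ ≤ r ^ (2 * 0 + 1) * Real.exp (-σ * ((0:ℕ):ℝ) ^ 2 - ((0:ℕ):ℝ) - 2) := by
            push_cast
            rw [pow_one]
            nlinarith [this, h2r]
    · -- 1 < w - θ
      have hw2 : (2:ℝ) < w := by linarith
      have hlog2 : Real.log 2 < b2 * X ^ p := by
        have h1 : Real.exp (Real.log 2) < Real.exp (b2 * X ^ p) := by
          rw [Real.exp_log two_pos, ← hwdef]; exact hw2
        exact (Real.exp_lt_exp).mp h1
      have hlog2' : (0.6931471803:ℝ) < Real.log 2 := Real.log_two_gt_d9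
      rcases le_or_gt σ (t - 1/2) with hστ | hστ
      · -- rounding case
        have hq1 : 1 ≤ (t - 1/2) / σ := (one_le_div hσ).mpr (by linarith)
        refine ⟨⌊(t - 1/2)/σ + 1/2⌋₊, main _ ?_⟩
        set α : ℕ := ⌊(t - 1/2)/σ + 1/2⌋₊ with hαdef
        clear_value α
        have hαu : (α:ℝ) ≤ (t - 1/2)/σ + 1/2 := by
          rw [hαdef]; exact Nat.floor_le (by linarith)
        have hαl : (t - 1/2)/σ - 1/2 ≤ (α:ℝ) := by
          rw [hαdef]
          have := Nat.lt_floor_add_one ((t - 1/2)/σ + 1/2)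
          linarith
        have hα1 : (1:ℝ) ≤ (α:ℝ) := by
          have h : (1:ℕ) ≤ α := by
            rw [hαdef]; exact Nat.le_floor (by push_cast; linarith)
          exact_mod_cast h
        have h1 : (α:ℝ) * σ ≤ (t - 1/2) + σ/2 := by
          have := mul_le_mul_of_nonneg_right hαu hσ.le
          rw [add_mul, div_mul_cancel₀ _ hσ.ne'] at this
          linarith
        have h2 : (t - 1/2) - σ/2 ≤ (α:ℝ) * σ := by
          have := mul_le_mul_of_nonneg_right hαl hσ.le
          rw [sub_mul, div_mul_cancel₀ _ hσ.ne'] at this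
          linarith
        have hZσ : σ * (3/2 * (b2 * X ^ p)) ≤ 75/512 * t^2 := by
          have : σ * (3/2 * (b2 * X ^ p)) = 3 * X ^ p / c4 := by
            rw [hb2def]; field_simp
          rw [this, div_le_iff₀ hc4]
          clear * - hM
          nlinarith [hM]
        clear hαdef hq1 main hmax hrt
        have hsq : ((α:ℝ) * σ - (t - 1/2)) ^ 2 ≤ (σ/2) ^ 2 := by
          clear * - h1 h2
          nlinarith [h1, h2]
        have e1 : σ^2 * (α:ℝ)^2 ≤ 2*(α:ℝ)*σ*(t - 1/2) - (t - 1/2)^2 + σ^2/4 := by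
          clear * - hsq
          nlinarith [hsq]
        have e2 : σ^2/4 + 2*σ + 75/512*t^2 ≤ σ*t + (t - 1/2)^2 := by
          clear * - hσ ht2 hστ
          nlinarith [mul_nonneg hσ.le (sub_nonneg.2 hστ),
            mul_nonneg hσ.le (show (0:ℝ) ≤ t - 2 by linarith), sq_nonneg (t - 2)]
        refine le_of_mul_le_mul_left ?_ hσ
        clear * - e1 hZσ e2
        nlinarith [e1, hZσ, e2]
      · -- α = 0 case
        refine ⟨0, main 0 ?_⟩
        push_cast
        rw [show σ * (0:ℝ)^2 + 0 + 2 + 3/2 * (b2 * X ^ p) = 2 + 3/2 * (b2 * X ^ p) by ring,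
          show (2 * (0:ℝ) + 1) * t = t by ring]
        by_contra hcon
        push_neg at hcon
        have hZσ : σ * (3/2 * (b2 * X ^ p)) = 3 * X ^ p / c4 := by
          rw [hb2def]; field_simp
        have hM' : 3 * X ^ p / c4 ≤ 3 * (25/512 * t^2) := by
          rw [div_le_iff₀ hc4]
          clear * - hM
          nlinarith [hM]
        have hlt : σ * (t - 2) < 3 * (25/512 * t^2) := by
          have h1 : σ * (t - 2) < σ * (3/2 * (b2 * X ^ p)) := by
            have := mul_lt_mul_of_pos_left (show t - 2 < 3/2 * (b2 * X ^ p) by linarith) hσ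
            linarith
          rw [hZσ] at h1
          linarith
        have ht35 : t ≤ 7/2 := by
          clear * - hσ ht2 hστ hlt
          nlinarith [hlt, mul_nonneg (show (0:ℝ) ≤ σ - (t - 1/2) by linarith)
            (show (0:ℝ) ≤ t - 2 by linarith), sq_nonneg (t - 7/2)]
        have hX4 : X ≤ 4 := by linarith
        have hXp4 : X ^ p ≤ c4 / 4 := by
          have h1 : X ^ p ≤ (4:ℝ) ^ p := rpow_le_rpow hX0 hX4 hp0.le
          have h2 : (4:ℝ) ^ p = c4 / 4 := by
            rw [hc4def, show (4:ℝ) = (2:ℝ)^((2:ℕ):ℝ) by rw [rpow_natCast]; norm_num]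
            rw [← rpow_mul (by norm_num : (0:ℝ) ≤ 2)]
            rw [show (((2:ℕ):ℝ)) * p = ((4:ℝ) + 2*ε) - ((2:ℕ):ℝ) by push_cast [hpdef]; ring]
            rw [rpow_sub two_pos, rpow_natCast]
            norm_num
          linarith
        have hfin : b2 * X ^ p ≤ 1 / (2*σ) := by
          rw [hb2def]
          calc 2 * (1/(c4*σ)) * X ^ p ≤ 2 * (1/(c4*σ)) * (c4/4) := by
                apply mul_le_mul_of_nonneg_left hXp4 (by positivity)
            _ = 1/(2*σ) := by field_simp; ring
        have : Real.log 2 < 1/(2*σ) := lt_of_lt_of_le hlog2 hfin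
        rw [lt_div_iff₀ (by positivity)] at this
        clear * - this hlog2' hστ ht2
        nlinarith [this, hlog2', hστ, ht2]

/-- If `u ∈ C(σ)` with constant `c₀ > 0`, `ε ∈ [0,1]` and
`b := 1/(2^{4+2ε} σ)`, then `L² Σ_{k≠0} e^{2b(ln(|k|+e))^{1+ε}} |û(k)|²` is finite and
`L² Σ_{k≠0} e^{2b(ln(|k|+e))^{1+ε}} |û(k)|² ≤ (4/3) c(ε) |u|²
  + (c₀ c₁)^{2/3} ν^{4/3} κ₀^{-2/3} |A^{1/2}u|^{2/3}`,
where `c(ε) := e^{2b(ln(e²+e))^{1+ε}}` and `c₁ := 1/(e²-e)`. -/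
theorem class_C_to_log_gevrey (L ν κ₀ : ℝ) (hL : 0 < L) (hν : 0 < ν)
    (hκ₀ : κ₀ = 2 * Real.pi / L) (σ ε c₀ : ℝ) (hσ : 0 < σ) (hε0 : 0 ≤ ε) (hε1 : ε ≤ 1)
    (hc₀ : 0 < c₀) (u : ℤ × ℤ → Vc) (hu : InH u)
    (husum : ∀ α : ℕ, SummableA κ₀ u α)
    (hubd : ∀ α : ℕ, sqA L κ₀ u α ≤ c₀ * Real.exp (σ * (α : ℝ) ^ 2) * ν ^ 2 * κ₀ ^ (2 * α)) :
    Summable (fun k : ℤ × ℤ =>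
      Real.exp (2 * (1 / ((2:ℝ) ^ ((4:ℝ) + 2 * ε) * σ)) *
        (Real.log (knorm k + Real.exp 1)) ^ ((1:ℝ) + ε)) * ‖u k‖ ^ 2) ∧
    L ^ 2 * ∑' k : ℤ × ℤ,
        Real.exp (2 * (1 / ((2:ℝ) ^ ((4:ℝ) + 2 * ε) * σ)) *
          (Real.log (knorm k + Real.exp 1)) ^ ((1:ℝ) + ε)) * ‖u k‖ ^ 2 ≤
      4 / 3 * Real.exp (2 * (1 / ((2:ℝ) ^ ((4:ℝ) + 2 * ε) * σ)) *
          (Real.log (Real.exp 1 ^ 2 + Real.exp 1)) ^ ((1:ℝ) + ε)) * sqA L κ₀ u 0 +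
        (c₀ * (1 / (Real.exp 1 ^ 2 - Real.exp 1))) ^ ((2:ℝ) / 3) * ν ^ ((4:ℝ) / 3) *
          κ₀ ^ (-(2:ℝ) / 3) * Real.sqrt (sqA L κ₀ u 1) ^ ((2:ℝ) / 3) := by

  classical
  have hπ := Real.pi_pos
  have hκ : 0 < κ₀ := by rw [hκ₀]; positivity
  have hL2 : (0:ℝ) < L^2 := by positivity
  have hE1 : (1:ℝ) < Real.exp 1 := by nlinarith [Real.exp_one_gt_d9]
  have hEd : (0:ℝ) < Real.exp 1^2 - Real.exp 1 := by nlinarith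
  have hsumA : ∀ a : ℕ, Summable (fun k : ℤ×ℤ => knorm k ^ (2*a) * ‖u k‖^2) := by
    intro a
    have h : Summable (fun k : ℤ×ℤ => κ₀^(2*a) * (knorm k^(2*a) * ‖u k‖^2)) := by
      apply Summable.congr (husum a)
      intro k
      rw [mul_pow]; ring
    exact (summable_mul_left_iff (pow_ne_zero _ hκ.ne')).mp h
  have htA : ∀ a : ℕ, ∑' k : ℤ×ℤ, knorm k ^ (2*a) * ‖u k‖^2
      ≤ c₀ * Real.exp (σ*(a:ℝ)^2) * ν^2 / L^2 := by
    intro a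
    have h : L ^ 2 * ∑' k : ℤ×ℤ, (κ₀ * knorm k) ^ (2 * a) * ‖u k‖ ^ 2
        ≤ c₀ * Real.exp (σ * (a:ℝ) ^ 2) * ν ^ 2 * κ₀ ^ (2 * a) := hubd a
    have e1 : ∑' k : ℤ×ℤ, (κ₀*knorm k)^(2*a) * ‖u k‖^2
        = κ₀^(2*a) * ∑' k : ℤ×ℤ, knorm k^(2*a)*‖u k‖^2 := by
      rw [← tsum_mul_left]
      apply tsum_congr
      intro k
      rw [mul_pow]; ring
    rw [e1] at h
    have hκp : (0:ℝ) < κ₀^(2*a) := pow_pos hκ _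
    rw [le_div_iff₀ hL2]
    have h4 : (∑' k : ℤ×ℤ, knorm k^(2*a)*‖u k‖^2) * L^2 * κ₀^(2*a)
        ≤ (c₀ * Real.exp (σ*(a:ℝ)^2) * ν^2) * κ₀^(2*a) := by linarith [h]
    exact le_of_mul_le_mul_right h4 hκp
  have hsum0 : Summable (fun k : ℤ×ℤ => ‖u k‖^2) := by
    apply Summable.congr (hsumA 0)
    intro k
    norm_num
  have hψsum : Summable (fun k : ℤ×ℤ => knorm k^2 * ‖u k‖^2) := by
    apply Summable.congr (hsumA 1)
    intro k
    norm_num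
  have hS0 : sqA L κ₀ u 0 = L^2 * ∑' k : ℤ×ℤ, ‖u k‖^2 := by
    show L ^ 2 * ∑' k : ℤ×ℤ, (κ₀ * knorm k) ^ (2 * 0) * ‖u k‖ ^ 2 = _
    congr 1
    apply tsum_congr
    intro k
    norm_num
  have hS1 : sqA L κ₀ u 1 = L^2 * κ₀^2 * ∑' k : ℤ×ℤ, knorm k^2 * ‖u k‖^2 := by
    show L ^ 2 * ∑' k : ℤ×ℤ, (κ₀ * knorm k) ^ (2 * 1) * ‖u k‖ ^ 2 = _
    have e : ∑' k : ℤ×ℤ, (κ₀*knorm k)^(2*1)*‖u k‖^2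
        = κ₀^2 * ∑' k : ℤ×ℤ, knorm k^2*‖u k‖^2 := by
      rw [← tsum_mul_left]
      apply tsum_congr
      intro k
      rw [show (2*1 : ℕ) = 2 from rfl, mul_pow]
      ring
    rw [e]; ring
  have hgeo : ∑' a : ℕ, Real.exp (-(a:ℝ) - 2) = 1/(Real.exp 1^2 - Real.exp 1) := by
    have h1 : ∀ a : ℕ, Real.exp (-(a:ℝ) - 2) = Real.exp (-2) * (Real.exp (-1))^a := by
      intro a
      rw [← Real.exp_nat_mul, ← Real.exp_add]
      congr 1; push_cast; ring
    have m2 : Real.exp (-2) * (Real.exp 1^2) = 1 := by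
      rw [show Real.exp 1^2 = Real.exp 2 by rw [← Real.exp_nat_mul]; norm_num,
        ← Real.exp_add]
      norm_num
    have m3 : Real.exp (-2) * Real.exp 1 = Real.exp (-1) := by
      rw [← Real.exp_add]; norm_num
    have hlt1 : Real.exp (-1) < 1 := exp_lt_one_iff.mpr (by norm_num)
    calc ∑' a : ℕ, Real.exp (-(a:ℝ)-2) = ∑' a : ℕ, Real.exp (-2) * (Real.exp (-1))^a :=
          tsum_congr h1
      _ = Real.exp (-2) * ∑' a : ℕ, (Real.exp (-1))^a := tsum_mul_left
      _ = Real.exp (-2) * (1 - Real.exp (-1))⁻¹ := by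
          rw [tsum_geometric_of_lt_one (exp_pos _).le hlt1]
      _ = 1/(Real.exp 1^2 - Real.exp 1) := by
          have hne1 : (0:ℝ) < 1 - Real.exp (-1) := by linarith
          rw [← div_eq_mul_inv, div_eq_div_iff hne1.ne' hEd.ne']
          linear_combination m2 - m3
  -- abbreviations (abstract pieces of the goal)
  set b2 : ℝ := 2 * (1 / ((2:ℝ) ^ ((4:ℝ) + 2 * ε) * σ)) with hb2def
  set cE : ℝ := Real.exp (b2 * Real.log (Real.exp 1 ^ 2 + Real.exp 1) ^ ((1:ℝ) + ε)) with hcEdef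
  set F : (ℤ×ℤ) → ℝ := fun k =>
    Real.exp (b2 * Real.log (knorm k + Real.exp 1) ^ ((1:ℝ) + ε)) * ‖u k‖ ^ 2 with hFdef
  set θc : ℝ := 4/3 * cE with hθcdef
  set Mx : (ℤ×ℤ) → ℝ := fun k =>
    max (Real.exp (b2 * Real.log (knorm k + Real.exp 1) ^ ((1:ℝ) + ε)) - θc) 0 with hMxdef
  set φ : (ℤ×ℤ) → ℝ := fun k => Mx k ^ ((3:ℝ)/2) * ‖u k‖^2 / knorm k with hφdef
  set ψ : (ℤ×ℤ) → ℝ := fun k => knorm k^2 * ‖u k‖^2 with hψdef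
  set g : ℕ → (ℤ×ℤ) → ℝ := fun a k =>
    Real.exp (-σ*(a:ℝ)^2 - (a:ℝ) - 2) * knorm k ^ (2*a) * ‖u k‖^2 with hgdef
  have hMx0 : ∀ k, 0 ≤ Mx k := fun k => le_max_right _ 0
  have hφ0 : ∀ k, 0 ≤ φ k := by
    intro k
    simp only [hφdef]
    exact div_nonneg (mul_nonneg (Real.rpow_nonneg (hMx0 k) _) (by positivity)) (knorm_nonneg k)
  have hψ0 : ∀ k, 0 ≤ ψ k := by
    intro k
    simp only [hψdef]
    positivity
  have hkey : ∀ k : ℤ×ℤ, k ≠ 0 → ∃ α : ℕ,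
      Mx k ^ ((3:ℝ)/2) ≤ knorm k^(2*α+1) * Real.exp (-σ*(α:ℝ)^2 - (α:ℝ) - 2) := by
    intro k hk
    obtain ⟨α, hα⟩ := key_alpha σ ε hσ hε0 hε1 (knorm k) (one_le_knorm hk)
    refine ⟨α, ?_⟩
    simp only [hMxdef, hθcdef, hcEdef, hb2def]
    exact hα
  have hgsum : ∀ k : ℤ×ℤ, Summable (fun a => g a k) := by
    intro k
    rcases eq_or_ne k 0 with rfl | hk
    · have e : (fun a : ℕ => g a 0) = fun _ => 0 := by
        funext a
        simp only [hgdef]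
        rw [hu.1]
        simp
      rw [e]; exact summable_zero
    · simp only [hgdef]
      have h := (summable_gauss σ hσ (knorm k) (one_le_knorm hk)).mul_right (‖u k‖^2)
      apply Summable.congr h
      intro a; ring
  have hφ_le : ∀ k : ℤ×ℤ, φ k ≤ ∑' a : ℕ, g a k := by
    intro k
    rcases eq_or_ne k 0 with rfl | hk
    · have e : φ 0 = 0 := by
        simp only [hφdef]
        rw [knorm_zero]
        simp
      rw [e]
      refine tsum_nonneg (fun a => ?_)
      simp only [hgdef]
      exact mul_nonneg (mul_nonneg (Real.exp_pos _).le
        (pow_nonneg (knorm_nonneg _) _)) (sq_nonneg _)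
    · obtain ⟨α, hα⟩ := hkey k hk
      have h1 : φ k ≤ g α k := by
        simp only [hφdef, hgdef]
        rw [div_le_iff₀ (lt_of_lt_of_le one_pos (one_le_knorm hk))]
        calc Mx k ^ ((3:ℝ)/2) * ‖u k‖^2
            ≤ (knorm k^(2*α+1) * Real.exp (-σ*(α:ℝ)^2 - (α:ℝ) - 2)) * ‖u k‖^2 :=
              mul_le_mul_of_nonneg_right hα (by positivity)
          _ = Real.exp (-σ*(α:ℝ)^2 - (α:ℝ) - 2) * knorm k^(2*α) * ‖u k‖^2 * knorm k := by
              rw [pow_succ]; ring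
      refine h1.trans (Summable.le_tsum (hgsum k) α (fun b _ => ?_))
      simp only [hgdef]
      exact mul_nonneg (mul_nonneg (Real.exp_pos _).le
        (pow_nonneg (knorm_nonneg _) _)) (sq_nonneg _)
  have hexp_split : ∀ a : ℕ, Real.exp (-(a:ℝ) - 2) = Real.exp (-2) * (Real.exp (-1))^a := by
    intro a
    rw [← Real.exp_nat_mul, ← Real.exp_add]
    congr 1; push_cast; ring
  have hRs : Summable (fun a : ℕ => c₀*ν^2/L^2 * Real.exp (-(a:ℝ) - 2)) := by
    apply Summable.mul_left
    refine Summable.congr (Summable.mul_left (Real.exp (-2))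
      (summable_geometric_of_lt_one (r := Real.exp (-1)) (exp_pos _).le
        (exp_lt_one_iff.mpr (by norm_num)))) ?_
    intro a
    exact (hexp_split a).symm
  have hsum_bd : ∀ s : Finset (ℤ×ℤ),
      ∑ k ∈ s, φ k ≤ c₀*ν^2/L^2 * (1/(Real.exp 1^2 - Real.exp 1)) := by
    intro s
    have h1 : ∑ k ∈ s, φ k ≤ ∑ k ∈ s, ∑' a : ℕ, g a k :=
      Finset.sum_le_sum (fun k _ => hφ_le k)
    have h2 : ∑ k ∈ s, ∑' a : ℕ, g a k = ∑' a : ℕ, ∑ k ∈ s, g a k :=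
      (Summable.tsum_finsetSum (fun k _ => hgsum k)).symm
    have h3 : ∀ a : ℕ, ∑ k ∈ s, g a k ≤ c₀*ν^2/L^2 * Real.exp (-(a:ℝ) - 2) := by
      intro a
      have e1 : ∑ k ∈ s, g a k
          = Real.exp (-σ*(a:ℝ)^2 - (a:ℝ) - 2) * ∑ k ∈ s, knorm k^(2*a)*‖u k‖^2 := by
        rw [Finset.mul_sum]
        apply Finset.sum_congr rfl
        intro k _
        simp only [hgdef]; ring
      have e2 : ∑ k ∈ s, knorm k^(2*a)*‖u k‖^2 ≤ c₀ * Real.exp (σ*(a:ℝ)^2) * ν^2/L^2 :=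
        (Summable.sum_le_tsum s (fun k _ => mul_nonneg (pow_nonneg (knorm_nonneg _) _)
          (sq_nonneg _)) (hsumA a)).trans (htA a)
      rw [e1]
      calc Real.exp (-σ*(a:ℝ)^2 - (a:ℝ) - 2) * ∑ k ∈ s, knorm k^(2*a)*‖u k‖^2
          ≤ Real.exp (-σ*(a:ℝ)^2 - (a:ℝ) - 2) * (c₀ * Real.exp (σ*(a:ℝ)^2) * ν^2/L^2) :=
            mul_le_mul_of_nonneg_left e2 (exp_pos _).le
        _ = c₀*ν^2/L^2 * (Real.exp (-σ*(a:ℝ)^2 - (a:ℝ) - 2) * Real.exp (σ*(a:ℝ)^2)) := by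
            ring
        _ = c₀*ν^2/L^2 * Real.exp (-(a:ℝ)-2) := by
            rw [← Real.exp_add, show -σ*(a:ℝ)^2 - (a:ℝ) - 2 + σ*(a:ℝ)^2 = -(a:ℝ)-2 by ring]
    have h4 : Summable (fun a : ℕ => ∑ k ∈ s, g a k) :=
      Summable.of_nonneg_of_le
        (fun a => Finset.sum_nonneg (fun k _ => by
          simp only [hgdef]
          exact mul_nonneg (mul_nonneg (Real.exp_pos _).le
            (pow_nonneg (knorm_nonneg _) _)) (sq_nonneg _))) h3 hRs
    calc ∑ k ∈ s, φ k ≤ ∑' a : ℕ, ∑ k ∈ s, g a k := h1.trans_eq h2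
      _ ≤ ∑' a : ℕ, c₀*ν^2/L^2 * Real.exp (-(a:ℝ)-2) := Summable.tsum_le_tsum h3 h4 hRs
      _ = c₀*ν^2/L^2 * ∑' a : ℕ, Real.exp (-(a:ℝ)-2) := tsum_mul_left
      _ = c₀*ν^2/L^2 * (1/(Real.exp 1^2-Real.exp 1)) := by rw [hgeo]
  have hφsum : Summable φ := summable_of_sum_le hφ0 hsum_bd
  have hφtsum : ∑' k : ℤ×ℤ, φ k ≤ c₀*ν^2/L^2 * (1/(Real.exp 1^2 - Real.exp 1)) :=
    Summable.tsum_le_of_sum_le hφsum hsum_bd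
  obtain ⟨hHs, hHle⟩ := holder32 hφ0 hψ0 hφsum hψsum
  have hpt : ∀ k : ℤ×ℤ, Mx k * ‖u k‖^2 ≤ (φ k)^((2:ℝ)/3) * (ψ k)^((1:ℝ)/3) := by
    intro k
    rcases eq_or_ne k 0 with rfl | hk
    · have e : Mx 0 * ‖u 0‖^2 = 0 := by rw [hu.1]; simp
      rw [e]
      exact mul_nonneg (Real.rpow_nonneg (hφ0 0) _) (Real.rpow_nonneg (hψ0 0) _)
    · have hr1 : (1:ℝ) ≤ knorm k := one_le_knorm hk
      have hr0 : (0:ℝ) < knorm k := lt_of_lt_of_le one_pos hr1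
      have hn2 : (0:ℝ) ≤ ‖u k‖^2 := sq_nonneg _
      have heq : (φ k)^((2:ℝ)/3) * (ψ k)^((1:ℝ)/3) = Mx k * ‖u k‖^2 := by
        simp only [hφdef, hψdef]
        rw [Real.div_rpow (mul_nonneg (Real.rpow_nonneg (hMx0 k) _) hn2) hr0.le,
          Real.mul_rpow (Real.rpow_nonneg (hMx0 k) _) hn2,
          Real.mul_rpow (sq_nonneg (knorm k)) hn2,
          ← Real.rpow_mul (hMx0 k),
          show (3:ℝ)/2 * (2/3) = 1 by norm_num, Real.rpow_one,
          ← Real.rpow_natCast (knorm k) 2,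
          ← Real.rpow_mul hr0.le]
        rw [show (((2:ℕ):ℝ)) * ((1:ℝ)/3) = 2/3 by push_cast; norm_num]
        have hx : (0:ℝ) < knorm k ^ ((2:ℝ)/3) := Real.rpow_pos_of_pos hr0 _
        have hn : (‖u k‖^2) ^ ((2:ℝ)/3) * (‖u k‖^2) ^ ((1:ℝ)/3) = ‖u k‖^2 := by
          rw [← Real.rpow_add' hn2 (by norm_num : (2:ℝ)/3 + 1/3 ≠ 0)]
          norm_num
        field_simp
        linear_combination (Mx k) * hn
      exact heq.ge
  have hMsum : Summable (fun k : ℤ×ℤ => Mx k * ‖u k‖^2) :=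
    Summable.of_nonneg_of_le (fun k => mul_nonneg (hMx0 k) (sq_nonneg _)) hpt hHs
  have hsplit : ∀ k : ℤ×ℤ, F k ≤ θc * ‖u k‖^2 + Mx k * ‖u k‖^2 := by
    intro k
    simp only [hFdef, hMxdef]
    have h1 := le_max_left
      (Real.exp (b2 * Real.log (knorm k + Real.exp 1) ^ ((1:ℝ) + ε)) - θc) 0
    calc Real.exp (b2 * Real.log (knorm k + Real.exp 1) ^ ((1:ℝ) + ε)) * ‖u k‖^2
        ≤ (θc + max (Real.exp (b2 * Real.log (knorm k + Real.exp 1) ^ ((1:ℝ) + ε)) - θc) 0)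
            * ‖u k‖^2 := mul_le_mul_of_nonneg_right (by linarith) (sq_nonneg _)
      _ = θc * ‖u k‖^2
          + max (Real.exp (b2 * Real.log (knorm k + Real.exp 1) ^ ((1:ℝ) + ε)) - θc) 0
            * ‖u k‖^2 := by ring
  have hθsum : Summable (fun k : ℤ×ℤ => θc*‖u k‖^2) := hsum0.mul_left θc
  have hF0 : ∀ k, 0 ≤ F k := by
    intro k
    simp only [hFdef]
    positivity
  have hFsum : Summable F := Summable.of_nonneg_of_le hF0 hsplit (hθsum.add hMsum)
  refine ⟨hFsum, ?_⟩
  have hT1 : ∑' k : ℤ×ℤ, F k ≤ θc * (∑' k : ℤ×ℤ, ‖u k‖^2) + ∑' k : ℤ×ℤ, Mx k*‖u k‖^2 := by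
    calc ∑' k : ℤ×ℤ, F k ≤ ∑' k : ℤ×ℤ, (θc*‖u k‖^2 + Mx k*‖u k‖^2) :=
          Summable.tsum_le_tsum hsplit hFsum (hθsum.add hMsum)
      _ = (∑' k : ℤ×ℤ, θc*‖u k‖^2) + ∑' k : ℤ×ℤ, Mx k*‖u k‖^2 := Summable.tsum_add hθsum hMsum
      _ = θc*(∑' k : ℤ×ℤ, ‖u k‖^2) + ∑' k : ℤ×ℤ, Mx k*‖u k‖^2 := by rw [tsum_mul_left]
  have hT2 : ∑' k : ℤ×ℤ, Mx k*‖u k‖^2 ≤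
      (c₀*ν^2/L^2*(1/(Real.exp 1^2-Real.exp 1)))^((2:ℝ)/3) * (∑' k : ℤ×ℤ, ψ k)^((1:ℝ)/3) := by
    calc ∑' k : ℤ×ℤ, Mx k*‖u k‖^2 ≤ ∑' k : ℤ×ℤ, (φ k)^((2:ℝ)/3)*(ψ k)^((1:ℝ)/3) :=
          Summable.tsum_le_tsum hpt hMsum hHs
      _ ≤ (∑' k : ℤ×ℤ, φ k)^((2:ℝ)/3) * (∑' k : ℤ×ℤ, ψ k)^((1:ℝ)/3) := hHle
      _ ≤ _ := by
          apply mul_le_mul_of_nonneg_right _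
            (Real.rpow_nonneg (tsum_nonneg (fun k => hψ0 k)) _)
          exact Real.rpow_le_rpow (tsum_nonneg (fun k => hφ0 k)) hφtsum (by norm_num)
  have hψval : ∑' k : ℤ×ℤ, ψ k = sqA L κ₀ u 1 / (L^2*κ₀^2) := by
    have : ∑' k : ℤ×ℤ, ψ k = ∑' k : ℤ×ℤ, knorm k^2 * ‖u k‖^2 := by
      apply tsum_congr
      intro k
      simp only [hψdef]
    rw [this, hS1]
    rw [mul_div_cancel_left₀ _ (by positivity)]
  have hs0 : (0:ℝ) ≤ sqA L κ₀ u 1 := by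
    rw [hS1]
    have : (0:ℝ) ≤ ∑' k : ℤ×ℤ, knorm k^2*‖u k‖^2 :=
      tsum_nonneg (fun k => by positivity)
    positivity
  -- final numeric bridge
  have hbr1 : L^2 * (θc * (∑' k : ℤ×ℤ, ‖u k‖^2)) = 4/3 * cE * sqA L κ₀ u 0 := by
    rw [hS0, hθcdef]; ring
  have hbr2 : L^2 * ((c₀*ν^2/L^2*(1/(Real.exp 1^2-Real.exp 1)))^((2:ℝ)/3)
        * (sqA L κ₀ u 1 / (L^2*κ₀^2))^((1:ℝ)/3))
      = (c₀ * (1 / (Real.exp 1 ^ 2 - Real.exp 1))) ^ ((2:ℝ) / 3) * ν ^ ((4:ℝ) / 3) *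
          κ₀ ^ (-(2:ℝ) / 3) * Real.sqrt (sqA L κ₀ u 1) ^ ((2:ℝ) / 3) := by
    have hA0 : (0:ℝ) ≤ c₀ * (1/(Real.exp 1^2 - Real.exp 1)) := by positivity
    have e0 : c₀*ν^2/L^2*(1/(Real.exp 1^2-Real.exp 1))
        = (c₀*(1/(Real.exp 1^2-Real.exp 1)))*ν^2/L^2 := by ring
    have hsqrt : Real.sqrt (sqA L κ₀ u 1) ^ ((2:ℝ)/3) = (sqA L κ₀ u 1) ^ ((1:ℝ)/3) := by
      rw [Real.sqrt_eq_rpow, ← Real.rpow_mul hs0]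
      norm_num
    have hν4 : ((ν^2:ℝ))^((2:ℝ)/3) = ν^((4:ℝ)/3) := by
      rw [← Real.rpow_natCast ν 2, ← Real.rpow_mul hν.le]
      norm_num
    have hL23 : ((L^2:ℝ))^((2:ℝ)/3) * (L^2)^((1:ℝ)/3) = L^2 := by
      rw [← Real.rpow_add hL2]
      norm_num
    have hκinv : κ₀ ^ (-(2:ℝ)/3) = (((κ₀^2:ℝ))^((1:ℝ)/3))⁻¹ := by
      rw [← Real.rpow_natCast κ₀ 2, ← Real.rpow_mul hκ.le, ← Real.rpow_neg hκ.le]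
      norm_num
    rw [e0, hsqrt, hκinv,
      Real.div_rpow (mul_nonneg hA0 (sq_nonneg ν)) hL2.le,
      Real.mul_rpow hA0 (sq_nonneg ν), hν4,
      Real.div_rpow hs0 (by positivity : (0:ℝ) ≤ L^2*κ₀^2),
      Real.mul_rpow hL2.le (sq_nonneg κ₀)]
    set X := (c₀*(1/(Real.exp 1^2-Real.exp 1)))^((2:ℝ)/3) with hXdef
    set P := ((L^2:ℝ))^((2:ℝ)/3) with hPdef
    set Q := ((L^2:ℝ))^((1:ℝ)/3) with hQdef
    set R := ((κ₀^2:ℝ))^((1:ℝ)/3) with hRdef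
    set s3 := (sqA L κ₀ u 1)^((1:ℝ)/3) with hs3def
    set n4 := ν^((4:ℝ)/3) with hn4def
    have hPne : P ≠ 0 := ne_of_gt (Real.rpow_pos_of_pos hL2 _)
    have hQne : Q ≠ 0 := ne_of_gt (Real.rpow_pos_of_pos hL2 _)
    have hRne : R ≠ 0 := ne_of_gt (Real.rpow_pos_of_pos (by positivity) _)
    have hPQ : P * Q = L^2 := hL23
    clear_value X P Q R s3 n4
    field_simp
    linear_combination (-(X * n4 * s3)) * hPQ
  calc L ^ 2 * ∑' k : ℤ×ℤ, F k
      ≤ L^2 * (θc * (∑' k : ℤ×ℤ, ‖u k‖^2)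
          + (c₀*ν^2/L^2*(1/(Real.exp 1^2-Real.exp 1)))^((2:ℝ)/3)
            * (sqA L κ₀ u 1 / (L^2*κ₀^2))^((1:ℝ)/3)) := by
        apply mul_le_mul_of_nonneg_left _ hL2.le
        rw [← hψval]
        linarith [hT1, hT2]
    _ = 4/3 * cE * sqA L κ₀ u 0
        + (c₀ * (1 / (Real.exp 1 ^ 2 - Real.exp 1))) ^ ((2:ℝ) / 3) * ν ^ ((4:ℝ) / 3) *
          κ₀ ^ (-(2:ℝ) / 3) * Real.sqrt (sqA L κ₀ u 1) ^ ((2:ℝ) / 3) := by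
        rw [mul_add, hbr1, hbr2]
end
end

section
/- If σ > 0 and u belongs to the class C(σ), then u belongs to E_b with b := 1/(64σ), i.e. |u|_b = (L² Σ_{k≠0} e^{2b(ln(|k|+e))²} |û(k)|²)^{1/2} < ∞. -/
noncomputable section

/-- Summability of `1/(1+n²)` over `ℤ`. -/
lemma summable_inv_one_add_sq : Summable (fun n : ℤ => 1 / (1 + (n : ℝ) ^ 2)) := by
  have hn : Summable (fun n : ℕ => 1 / (1 + (n : ℝ) ^ 2)) := by
    have h2 : Summable (fun n : ℕ => 1 / (n : ℝ) ^ 2) :=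
      Real.summable_one_div_nat_pow.mpr one_lt_two
    have h3 : Summable (fun n : ℕ => 1 / ((n : ℝ) + 1) ^ 2) := by
      have := (summable_nat_add_iff 1).mpr h2
      refine this.congr fun n => ?_
      push_cast
      ring_nf
    refine Summable.of_nonneg_of_le (fun n => by positivity) (fun n => ?_) (h3.mul_left 2)
    have hp : (0:ℝ) < 1 + (n : ℝ) ^ 2 := by positivity
    have hq : (0:ℝ) < ((n : ℝ) + 1) ^ 2 := by positivity
    rw [mul_one_div, div_le_div_iff₀ hp hq]
    nlinarith [sq_nonneg ((n:ℝ) - 1)]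
  refine Summable.of_nat_of_neg (hn.congr fun n => by push_cast; ring_nf) ?_
  refine hn.congr fun n => ?_
  push_cast
  ring_nf

/-- The core quadratic inequality. -/
lemma key_quad (σ t a lr : ℝ) (hσ : 0 < σ) (ht : 1 ≤ t) (h1 : t ≤ 4*σ*a)
    (h2 : 4*σ*a ≤ t + 4*σ) (h3 : t - 2 ≤ lr) (h4 : 0 ≤ lr) :
    2*(1/(64*σ))*t^2 + σ*a^2 - 2*a*lr ≤ -(4*t) + (2*(9*σ+2)^2/(13*σ) + σ + 4) := by
  have h832 : (0:ℝ) < 832*σ := by positivity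
  rw [← mul_le_mul_iff_right₀ h832]
  have hσ' : σ ≠ 0 := ne_of_gt hσ
  have e1 : 832*σ*(2*(1/(64*σ))*t^2 + σ*a^2 - 2*a*lr)
      = 26*t^2 + 832*σ^2*a^2 - 1664*σ*a*lr := by field_simp; ring
  have e2 : 832*σ*(-(4*t) + (2*(9*σ+2)^2/(13*σ) + σ + 4))
      = -(3328*σ*t) + 128*(9*σ+2)^2 + 832*σ^2 + 3328*σ := by field_simp; ring
  rw [e1, e2]
  have hx0 : (0:ℝ) ≤ 4*σ*a := le_trans (by linarith) h1
  have f1 : 416*(4*σ*a)*(t-2) ≤ 416*(4*σ*a)*lr := by nlinarith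
  have f2 : 416*t*t ≤ 416*(4*σ*a)*t := by nlinarith
  have f3 : (4*σ*a)^2 ≤ (t+4*σ)^2 := by nlinarith
  nlinarith [sq_nonneg (676*t - 832 - 3744*σ), f1, f2, f3, h2, hx0]


set_option maxHeartbeats 1000000 in
/-- If `σ > 0` and `u ∈ C(σ)`, then `u ∈ E_b` with `b := 1/(64σ)`,
i.e. `|u|_b = (L² Σ_{k≠0} e^{2b(ln(|k|+e))²} |û(k)|²)^{1/2} < ∞`. -/
theorem class_C_subset_Eb (L ν κ₀ : ℝ) (hL : 0 < L) (hν : 0 < ν)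
    (hκ₀ : κ₀ = 2 * Real.pi / L) (σ : ℝ) (hσ : 0 < σ)
    (u : ℤ × ℤ → Vc) (hu : InH u) (huC : InC L κ₀ ν σ u) :
    Summable (ebTerm (1 / (64 * σ)) u) := by
  obtain ⟨hu0, -, -⟩ := hu
  obtain ⟨hsumm, c₀, hc⟩ := huC
  have hπ := Real.pi_pos
  have hκpos : 0 < κ₀ := by rw [hκ₀]; positivity
  set C : ℝ := c₀ * ν ^ 2 / L ^ 2 with hCdef
  have hcν : 0 ≤ c₀ * ν ^ 2 := by
    have hA : 0 ≤ sqA L κ₀ u 0 :=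
      mul_nonneg (by positivity) (tsum_nonneg fun k =>
        mul_nonneg (pow_nonneg (mul_nonneg hκpos.le (Real.sqrt_nonneg _)) _) (sq_nonneg _))
    have h := le_trans hA (hc 0)
    norm_num at h
    exact h
  have hC0 : 0 ≤ C := div_nonneg hcν (by positivity)
  have hbound : ∀ (k : ℤ × ℤ) (α : ℕ),
      (knorm k) ^ (2 * α) * ‖u k‖ ^ 2 ≤ C * Real.exp (σ * (α : ℝ) ^ 2) := by
    intro k α
    have h1 : (κ₀ * knorm k) ^ (2 * α) * ‖u k‖ ^ 2
        ≤ ∑' j : ℤ × ℤ, (κ₀ * knorm j) ^ (2 * α) * ‖u j‖ ^ 2 :=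
      Summable.le_tsum (hsumm α) k (fun j _ =>
        mul_nonneg (pow_nonneg (mul_nonneg hκpos.le (Real.sqrt_nonneg _)) _) (sq_nonneg _))
    have h2 := hc α
    unfold sqA at h2
    have hL2 : (0:ℝ) < L ^ 2 := by positivity
    have h3 : (κ₀ * knorm k) ^ (2 * α) * ‖u k‖ ^ 2
        ≤ c₀ * Real.exp (σ * (α : ℝ) ^ 2) * ν ^ 2 * κ₀ ^ (2 * α) / L ^ 2 := by
      rw [le_div_iff₀ hL2]
      calc (κ₀ * knorm k) ^ (2 * α) * ‖u k‖ ^ 2 * L ^ 2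
          = L ^ 2 * ((κ₀ * knorm k) ^ (2 * α) * ‖u k‖ ^ 2) := by ring
        _ ≤ L ^ 2 * ∑' j : ℤ × ℤ, (κ₀ * knorm j) ^ (2 * α) * ‖u j‖ ^ 2 :=
            mul_le_mul_of_nonneg_left h1 (le_of_lt hL2)
        _ ≤ _ := h2
    have hk2 : (0:ℝ) < κ₀ ^ (2 * α) := by positivity
    have h4 : κ₀ ^ (2 * α) * ((knorm k) ^ (2 * α) * ‖u k‖ ^ 2)
        ≤ κ₀ ^ (2 * α) * (C * Real.exp (σ * (α : ℝ) ^ 2)) := by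
      calc κ₀ ^ (2 * α) * ((knorm k) ^ (2 * α) * ‖u k‖ ^ 2)
          = (κ₀ * knorm k) ^ (2 * α) * ‖u k‖ ^ 2 := by rw [mul_pow]; ring
        _ ≤ c₀ * Real.exp (σ * (α : ℝ) ^ 2) * ν ^ 2 * κ₀ ^ (2 * α) / L ^ 2 := h3
        _ = κ₀ ^ (2 * α) * (C * Real.exp (σ * (α : ℝ) ^ 2)) := by
            rw [hCdef]; field_simp
    exact le_of_mul_le_mul_left h4 hk2
  have he1 : (2:ℝ) ≤ Real.exp 1 := by nlinarith [Real.add_one_le_exp 1]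
  have hexp2 : Real.exp 1 + 1 ≤ Real.exp 2 := by
    have h : Real.exp 2 = Real.exp 1 * Real.exp 1 := by
      rw [← Real.exp_add]; norm_num
    nlinarith
  set C₂ : ℝ := 2*(9*σ+2)^2/(13*σ) + σ + 4 with hC2def
  set M : ℝ := C * Real.exp C₂ with hM
  have hM0 : 0 ≤ M := mul_nonneg hC0 (Real.exp_pos _).le
  have hg : Summable (fun k : ℤ × ℤ =>
      M * (1 / (1 + (k.1 : ℝ) ^ 2) * (1 / (1 + (k.2 : ℝ) ^ 2)))) := by
    have h := Summable.mul_of_nonneg summable_inv_one_add_sq summable_inv_one_add_sq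
      (fun n => by positivity) (fun n => by positivity)
    exact h.mul_left M
  refine Summable.of_nonneg_of_le (fun k => ?_) (fun k => ?_) hg
  · unfold ebTerm; positivity
  · by_cases hk : k = 0
    · subst hk
      unfold ebTerm
      rw [hu0]
      simp only [norm_zero, ne_eq, OfNat.ofNat_ne_zero, not_false_eq_true, zero_pow, mul_zero]
      positivity
    · unfold ebTerm
      have hrsq : (1:ℝ) ≤ (k.1 : ℝ) ^ 2 + (k.2 : ℝ) ^ 2 := by
        have hor : k.1 ≠ 0 ∨ k.2 ≠ 0 := by
          by_contra h; push_neg at h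
          exact hk (Prod.ext h.1 h.2)
        have hki : (1:ℤ) ≤ k.1 ^ 2 + k.2 ^ 2 := by
          rcases hor with h | h
          · nlinarith [Int.one_le_abs h, sq_abs k.1, sq_nonneg k.2, abs_nonneg k.1]
          · nlinarith [Int.one_le_abs h, sq_abs k.2, sq_nonneg k.1, abs_nonneg k.2]
        exact_mod_cast hki
      set r := knorm k with hr
      have hr1 : 1 ≤ r := Real.one_le_sqrt.mpr hrsq
      have hr0 : 0 < r := lt_of_lt_of_le one_pos hr1
      have hrsq' : r ^ 2 = (k.1 : ℝ) ^ 2 + (k.2 : ℝ) ^ 2 := Real.sq_sqrt (by positivity)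
      set t := Real.log (r + Real.exp 1) with htdef
      set lr := Real.log r with hlrdef
      have hre0 : (0:ℝ) < r + Real.exp 1 := by positivity
      have ht1 : 1 ≤ t := by
        have h := Real.log_le_log (Real.exp_pos 1) (by linarith : Real.exp 1 ≤ r + Real.exp 1)
        rwa [Real.log_exp] at h
      have h3' : t ≤ lr + 2 := by
        have hle : r + Real.exp 1 ≤ r * Real.exp 2 := by nlinarith
        have h := Real.log_le_log hre0 hle
        rwa [Real.log_mul (ne_of_gt hr0) (Real.exp_ne_zero 2), Real.log_exp] at h
      have h4' : 0 ≤ lr := Real.log_nonneg hr1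
      set α : ℕ := ⌈t / (4 * σ)⌉₊ with hα
      have h4σ : (0:ℝ) < 4 * σ := by positivity
      have hta : 0 ≤ t / (4 * σ) := by positivity
      have hdt : 4 * σ * (t / (4 * σ)) = t := by field_simp
      have h1' : t ≤ 4 * σ * (α : ℝ) := by
        have h := mul_le_mul_of_nonneg_left (Nat.le_ceil (t / (4 * σ))) (le_of_lt h4σ)
        rwa [hdt] at h
      have h2' : 4 * σ * (α : ℝ) ≤ t + 4 * σ := by
        have h := mul_lt_mul_of_pos_left (Nat.ceil_lt_add_one hta) h4σ
        rw [mul_add, hdt, mul_one] at h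
        linarith
      have hbk := hbound k α
      have hrpow : r ^ (2 * α) = Real.exp (2 * (α : ℝ) * lr) := by
        rw [show 2 * (α : ℝ) * lr = ((2 * α : ℕ) : ℝ) * lr by push_cast; ring,
          Real.exp_nat_mul, hlrdef, Real.exp_log hr0]
      have hpow_pos : (0:ℝ) < r ^ (2 * α) := pow_pos hr0 _
      have hukb : ‖u k‖ ^ 2 ≤ C * Real.exp (σ * (α : ℝ) ^ 2 - 2 * (α : ℝ) * lr) := by
        have heq : C * Real.exp (σ * (α : ℝ) ^ 2 - 2 * (α : ℝ) * lr)
            = C * Real.exp (σ * (α : ℝ) ^ 2) / r ^ (2 * α) := by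
          rw [Real.exp_sub, hrpow]; ring
        rw [heq, le_div_iff₀ hpow_pos]
        calc ‖u k‖ ^ 2 * r ^ (2 * α) = r ^ (2 * α) * ‖u k‖ ^ 2 := by ring
          _ ≤ C * Real.exp (σ * (α : ℝ) ^ 2) := hbk
      have hkey := key_quad σ t (α : ℝ) lr hσ ht1 h1' h2' (by linarith) h4'
      calc Real.exp (2 * (1 / (64 * σ)) * t ^ 2) * ‖u k‖ ^ 2
          ≤ Real.exp (2 * (1 / (64 * σ)) * t ^ 2)
            * (C * Real.exp (σ * (α : ℝ) ^ 2 - 2 * (α : ℝ) * lr)) :=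
            mul_le_mul_of_nonneg_left hukb (Real.exp_pos _).le
        _ = C * Real.exp (2 * (1 / (64 * σ)) * t ^ 2
            + (σ * (α : ℝ) ^ 2 - 2 * (α : ℝ) * lr)) := by
            rw [mul_left_comm, ← Real.exp_add]
        _ ≤ C * Real.exp (-(4 * t) + C₂) := by
            apply mul_le_mul_of_nonneg_left _ hC0
            exact Real.exp_le_exp.mpr (by linarith)
        _ = M * Real.exp (-(4 * t)) := by rw [hM, Real.exp_add]; ring
        _ ≤ M * (1 / (1 + (k.1 : ℝ) ^ 2) * (1 / (1 + (k.2 : ℝ) ^ 2))) := by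
            apply mul_le_mul_of_nonneg_left _ hM0
            have hre4 : Real.exp (-(4 * t)) = 1 / (r + Real.exp 1) ^ 4 := by
              rw [show -(4 * t) = -(((4:ℕ) : ℝ) * t) by norm_num, Real.exp_neg,
                Real.exp_nat_mul, htdef, Real.exp_log hre0, one_div]
            have hAB : (1 + (k.1 : ℝ) ^ 2) * (1 + (k.2 : ℝ) ^ 2) ≤ (1 + r ^ 2) ^ 2 := by
              nlinarith [sq_nonneg (k.1 : ℝ), sq_nonneg (k.2 : ℝ),
                sq_nonneg ((k.1 : ℝ) * (k.2 : ℝ))]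
            have h1r : 1 + r ^ 2 ≤ (r + Real.exp 1) ^ 2 := by nlinarith
            have hprod : (1 + (k.1 : ℝ) ^ 2) * (1 + (k.2 : ℝ) ^ 2)
                ≤ (r + Real.exp 1) ^ 4 := by
              calc (1 + (k.1 : ℝ) ^ 2) * (1 + (k.2 : ℝ) ^ 2) ≤ (1 + r ^ 2) ^ 2 := hAB
                _ ≤ ((r + Real.exp 1) ^ 2) ^ 2 := by
                    apply pow_le_pow_left₀ (by positivity) h1r
                _ = (r + Real.exp 1) ^ 4 := by ring
            rw [hre4, show 1 / (1 + (k.1 : ℝ) ^ 2) * (1 / (1 + (k.2 : ℝ) ^ 2))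
                = 1 / ((1 + (k.1 : ℝ) ^ 2) * (1 + (k.2 : ℝ) ^ 2)) by rw [div_mul_div_comm, one_mul]]
            exact one_div_le_one_div_of_le (by positivity) hprod
end
end
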